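/- arXiv:2402.06430 — 3 statements merged into one kernel-verified Lean document; each statement's English description precedes it below -/
import Mathlib

section
/- For compact subsets A, B of ℂ with 0 ∉ A and 0 ∉ B, the boundary of the Minkowski product is contained in the Minkowski product of the boundaries: ∂(A ⊗ B) ⊆ ∂A ⊗ ∂B. -/
theorem frontier_minkowski_prod_subset (A B : Set ℂ) (hA : IsCompact A) (hB : IsCompact B)
    (h0A : (0 : ℂ) ∉ A) (h0B : (0 : ℂ) ∉ B) :
    frontier {x | ∃ a ∈ A, ∃ b ∈ B, x = a * b} ⊆
    {x | ∃ a ∈ frontier A, ∃ b ∈ frontier B, x = a * b} := by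
  intro x hx
  set S := {x : ℂ | ∃ a ∈ A, ∃ b ∈ B, x = a * b} with hSdef
  have hSeq : S = (fun p : ℂ × ℂ => p.1 * p.2) '' (A ×ˢ B) := by
    ext z
    constructor
    · rintro ⟨a, ha, b, hb, rfl⟩; exact ⟨(a, b), ⟨ha, hb⟩, rfl⟩
    · rintro ⟨⟨a, b⟩, ⟨ha, hb⟩, rfl⟩; exact ⟨a, ha, b, hb, rfl⟩
  have hS : IsCompact S := by
    rw [hSeq]; exact (hA.prod hB).image continuous_mul
  have hxS : x ∈ S := by
    have h1 : x ∈ closure S := hx.1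
    rwa [hS.isClosed.closure_eq] at h1
  have hxni : x ∉ interior S := hx.2
  obtain ⟨a, ha, b, hb, rfl⟩ := hxS
  have ha0 : a ≠ 0 := fun h => h0A (h ▸ ha)
  have hb0 : b ≠ 0 := fun h => h0B (h ▸ hb)
  refine ⟨a, ⟨subset_closure ha, ?_⟩, b, ⟨subset_closure hb, ?_⟩, rfl⟩
  · intro hia
    apply hxni
    have hopen : IsOpen ((fun z => z * b) '' interior A) :=
      (Homeomorph.mulRight₀ b hb0).isOpenMap _ isOpen_interior
    have hsub : (fun z => z * b) '' interior A ⊆ S := by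
      rintro y ⟨z, hz, rfl⟩
      exact ⟨z, interior_subset hz, b, hb, rfl⟩
    exact interior_maximal hsub hopen ⟨a, hia, rfl⟩
  · intro hib
    apply hxni
    have hopen : IsOpen ((fun z => a * z) '' interior B) :=
      (Homeomorph.mulLeft₀ a ha0).isOpenMap _ isOpen_interior
    have hsub : (fun z => a * z) '' interior B ⊆ S := by
      rintro y ⟨z, hz, rfl⟩
      exact ⟨a, ha, z, interior_subset hz, rfl⟩
    exact interior_maximal hsub hopen ⟨b, hib, rfl⟩
end

section
/- (Gauss map matching for sums) Let F, G : ℝ → ℂ be continuously differentiable regular curves (F'(s) ≠ 0, G'(t) ≠ 0 for all s, t). If F(s₀) + G(t₀) lies on the boundary of the set {F(s) + G(t) | s, t ∈ ℝ}, then the arguments of the tangent vectors agree up to sign of direction: F'(s₀) and G'(t₀) are real scalar multiples of each other (i.e., they are ℝ-linearly dependent). -/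
theorem gauss_map_matching_sum (F G : ℝ → ℂ)
    (hF : ContDiff ℝ 1 F) (hG : ContDiff ℝ 1 G)
    (hF' : ∀ s, deriv F s ≠ 0) (hG' : ∀ t, deriv G t ≠ 0)
    (s₀ t₀ : ℝ)
    (hb : F s₀ + G t₀ ∈ frontier {z | ∃ s t : ℝ, z = F s + G t}) :
    ¬ LinearIndependent ℝ ![deriv F s₀, deriv G t₀] := by
  intro hli
  set v := deriv F s₀
  set w := deriv G t₀
  -- the linear map (a,b) ↦ a•v + b•w
  set l : (ℝ × ℝ) →ₗ[ℝ] ℂ :=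
    LinearMap.coprod (LinearMap.toSpanSingleton ℝ ℂ v) (LinearMap.toSpanSingleton ℝ ℂ w) with hl
  have hlapp : ∀ p : ℝ × ℝ, l p = p.1 • v + p.2 • w := fun p => rfl
  have hinj : Function.Injective l := by
    rw [← LinearMap.ker_eq_bot, LinearMap.ker_eq_bot']
    rintro ⟨a, b⟩ hab
    have := (LinearIndependent.pair_iff.1 hli) a b (by simpa [hlapp] using hab)
    simp [Prod.ext_iff, this.1, this.2]
  have hsurj : Function.Surjective l :=
    (LinearMap.injective_iff_surjective_of_finrank_eq_finrank
      (by simp [Complex.finrank_real_complex])).1 hinj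
  set e : (ℝ × ℝ) ≃ₗ[ℝ] ℂ := LinearEquiv.ofBijective l ⟨hinj, hsurj⟩ with he
  set ce : (ℝ × ℝ) ≃L[ℝ] ℂ := e.toContinuousLinearEquiv with hce
  -- H has strict derivative ce at (s₀, t₀)
  have hFd : HasStrictDerivAt F v s₀ := hF.contDiffAt.hasStrictDerivAt one_ne_zero
  have hGd : HasStrictDerivAt G w t₀ := hG.contDiffAt.hasStrictDerivAt one_ne_zero
  have h1 : HasStrictFDerivAt (fun p : ℝ × ℝ => F p.1)
      ((ContinuousLinearMap.smulRight (1 : ℝ →L[ℝ] ℝ) v).comp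
        (ContinuousLinearMap.fst ℝ ℝ ℝ)) (s₀, t₀) :=
    hFd.hasStrictFDerivAt.comp (s₀, t₀) (ContinuousLinearMap.fst ℝ ℝ ℝ).hasStrictFDerivAt
  have h2 : HasStrictFDerivAt (fun p : ℝ × ℝ => G p.2)
      ((ContinuousLinearMap.smulRight (1 : ℝ →L[ℝ] ℝ) w).comp
        (ContinuousLinearMap.snd ℝ ℝ ℝ)) (s₀, t₀) :=
    hGd.hasStrictFDerivAt.comp (s₀, t₀) (ContinuousLinearMap.snd ℝ ℝ ℝ).hasStrictFDerivAt
  have hsum := h1.add h2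
  have hEq : ((ContinuousLinearMap.smulRight (1 : ℝ →L[ℝ] ℝ) v).comp
        (ContinuousLinearMap.fst ℝ ℝ ℝ) +
      (ContinuousLinearMap.smulRight (1 : ℝ →L[ℝ] ℝ) w).comp
        (ContinuousLinearMap.snd ℝ ℝ ℝ)) = (ce : (ℝ × ℝ) →L[ℝ] ℂ) := by
    ext p <;> simp [hce, he, hlapp] <;> change _ = l _ <;> simp [hlapp]
  rw [hEq] at hsum
  have hmap : Filter.map (fun p : ℝ × ℝ => F p.1 + G p.2) (nhds (s₀, t₀)) =
      nhds (F s₀ + G t₀) := hsum.map_nhds_eq_of_equiv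
  have hmem : {z : ℂ | ∃ s t : ℝ, z = F s + G t} ∈ nhds (F s₀ + G t₀) := by
    rw [← hmap, Filter.mem_map]
    filter_upwards with p
    exact ⟨p.1, p.2, rfl⟩
  have : F s₀ + G t₀ ∈ interior {z : ℂ | ∃ s t : ℝ, z = F s + G t} :=
    mem_interior_iff_mem_nhds.2 hmem
  exact hb.2 this
end

section
/- (Gauss map matching for products) Let F, G : ℝ → ℂ be continuously differentiable regular curves avoiding 0. If F(s₀) · G(t₀) lies on the boundary of the set {F(s) · G(t) | s, t ∈ ℝ}, then the logarithmic derivatives F'(s₀)/F(s₀) and G'(t₀)/G(t₀) are ℝ-linearly dependent as vectors in ℂ. -/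
theorem gauss_map_matching_prod (F G : ℝ → ℂ)
    (hF : ContDiff ℝ 1 F) (hG : ContDiff ℝ 1 G)
    (hF0 : ∀ s, F s ≠ 0) (hG0 : ∀ t, G t ≠ 0)
    (hF' : ∀ s, deriv F s ≠ 0) (hG' : ∀ t, deriv G t ≠ 0)
    (s₀ t₀ : ℝ)
    (hb : F s₀ * G t₀ ∈ frontier {z | ∃ s t : ℝ, z = F s * G t}) :
    ¬ LinearIndependent ℝ ![deriv F s₀ / F s₀, deriv G t₀ / G t₀] := by
  intro hli
  -- independence of the unnormalized vectors
  set u : ℂ := deriv F s₀ * G t₀ with hu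
  set v : ℂ := F s₀ * deriv G t₀ with hv
  have hc : (F s₀ * G t₀ : ℂ) ≠ 0 := mul_ne_zero (hF0 s₀) (hG0 t₀)
  have hli2 : LinearIndependent ℝ ![u, v] := by
    have hmap := hli.map' (LinearMap.mulRight ℝ (F s₀ * G t₀))
      (LinearMap.ker_eq_bot.2 (fun a b hab => by
        simpa [mul_comm] using mul_right_cancel₀ hc hab))
    have : (LinearMap.mulRight ℝ (F s₀ * G t₀)) ∘ ![deriv F s₀ / F s₀, deriv G t₀ / G t₀]
        = ![u, v] := by
      have hF0' : F s₀ ≠ 0 := hF0 s₀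
      have hG0' : G t₀ ≠ 0 := hG0 t₀
      funext i
      fin_cases i <;>
        simp only [Function.comp_apply, LinearMap.mulRight_apply, Matrix.cons_val_zero,
          Matrix.cons_val_one, Matrix.head_cons, hu, hv, Fin.zero_eta, Fin.mk_one] <;>
        field_simp <;> ring
    rwa [this] at hmap
  -- strict derivative of Φ(s,t) = F s * G t at (s₀,t₀)
  have hFd : HasStrictDerivAt F (deriv F s₀) s₀ :=
    (hF.contDiffAt.hasStrictDerivAt one_ne_zero)
  have hGd : HasStrictDerivAt G (deriv G t₀) t₀ :=
    (hG.contDiffAt.hasStrictDerivAt one_ne_zero)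
  set p : ℝ × ℝ := (s₀, t₀) with hp
  have h1 : HasStrictFDerivAt (fun q : ℝ × ℝ => F q.1)
      (((1 : ℝ →L[ℝ] ℝ).smulRight (deriv F s₀)).comp (ContinuousLinearMap.fst ℝ ℝ ℝ)) p :=
    (hFd.hasStrictFDerivAt).comp p (hasStrictFDerivAt_fst)
  have h2 : HasStrictFDerivAt (fun q : ℝ × ℝ => G q.2)
      (((1 : ℝ →L[ℝ] ℝ).smulRight (deriv G t₀)).comp (ContinuousLinearMap.snd ℝ ℝ ℝ)) p :=
    (hGd.hasStrictFDerivAt).comp p (hasStrictFDerivAt_snd)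
  have hmul := h1.mul h2
  set L : (ℝ × ℝ) →L[ℝ] ℂ :=
    (F p.1 • ((1 : ℝ →L[ℝ] ℝ).smulRight (deriv G t₀)).comp (ContinuousLinearMap.snd ℝ ℝ ℝ) +
      G p.2 • ((1 : ℝ →L[ℝ] ℝ).smulRight (deriv F s₀)).comp (ContinuousLinearMap.fst ℝ ℝ ℝ))
    with hL
  have hLval : ∀ q : ℝ × ℝ, L q = q.1 • u + q.2 • v := by
    intro q
    simp [hL, hu, hv, smul_smul]
    ring
  -- L is bijective
  have hinj : Function.Injective L := by
    intro a b hab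
    have h0 : L (a - b) = 0 := by
      simp [map_sub, hab]
    rw [hLval] at h0
    obtain ⟨h01, h02⟩ := LinearIndependent.pair_iff.1 hli2 _ _ h0
    have : a - b = 0 := Prod.ext h01 h02
    exact sub_eq_zero.1 this
  have hsurj : Function.Surjective L := by
    exact (LinearMap.injective_iff_surjective_of_finrank_eq_finrank
      (f := (L : (ℝ × ℝ) →ₗ[ℝ] ℂ))
      (by simp [Complex.finrank_real_complex])).1 hinj
  set eL : (ℝ × ℝ) ≃ₗ[ℝ] ℂ := LinearEquiv.ofBijective (L : (ℝ × ℝ) →ₗ[ℝ] ℂ) ⟨hinj, hsurj⟩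
  set e : (ℝ × ℝ) ≃L[ℝ] ℂ := eL.toContinuousLinearEquiv
  have hΦ : HasStrictFDerivAt (fun q : ℝ × ℝ => F q.1 * G q.2) (e : (ℝ × ℝ) →L[ℝ] ℂ) p := by
    have : (e : (ℝ × ℝ) →L[ℝ] ℂ) = L := by
      apply ContinuousLinearMap.ext
      intro q
      rfl
    rw [this]
    exact hmul
  have hmap : Filter.map (fun q : ℝ × ℝ => F q.1 * G q.2) (nhds p)
      = nhds (F s₀ * G t₀) := hΦ.map_nhds_eq_of_equiv
  have hmem : {z : ℂ | ∃ s t : ℝ, z = F s * G t} ∈ nhds (F s₀ * G t₀) := by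
    rw [← hmap]
    exact Filter.mem_map.2 (Filter.univ_mem' (fun q => ⟨q.1, q.2, rfl⟩))
  have hint : F s₀ * G t₀ ∈ interior {z : ℂ | ∃ s t : ℝ, z = F s * G t} :=
    mem_interior_iff_mem_nhds.2 hmem
  exact hb.2 hint
end
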